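/- (Theorem 5, part 2: Generalized Inverse Gaussian / Gamma full conditionals of D̃.) Let G be a graph on {1,…,p} with edge set E such that the identity ordering is a Generalized Bartlett ordering of G, let U be symmetric positive definite, and δ ∈ (0,∞)^p. Define the density in (L_I, D̃) coordinates π̃(L_I,D̃) = (∏_{k=1}^{p−1} D̃_k^{p−k}) · π*_{U,δ}(L_I, D(D̃)). Fix 1 ≤ k ≤ p, fix all of L_I at arbitrary real values and all D̃_{k'} for k' ≠ k at arbitrary positive values. Then there exist constants C > 0, a > 0 and b ≥ 0 (depending on the fixed values) such that for all t > 0, π̃ with D̃_k := t equals C · t^{α_k} · exp(−a t − b/t), where α_k = (p−k) + ∑_{l=k}^{p} (δ_l + 2ν_l)/2; moreover for k = 1 one may take b = 0 (a Gamma kernel), while for k ≥ 2 the conditional is a Generalized Inverse Gaussian kernel. -/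

import Mathlib

open SimpleGraph

variable {V : Type*}

/-- One step of the elimination/triangulation process: at step `k` (0-based) the vertex with
label `k` is eliminated, and all pairs of its neighbours with larger labels are joined. -/
def triStep {n : ℕ} (σ : V ≃ Fin n) (H : SimpleGraph V) (k : ℕ) : SimpleGraph V where
  Adj u v := H.Adj u v ∨
    (u ≠ v ∧ ∃ hk : k < n, k < (σ u : ℕ) ∧ k < (σ v : ℕ) ∧
      H.Adj u (σ.symm ⟨k, hk⟩) ∧ H.Adj v (σ.symm ⟨k, hk⟩))
  symm := ⟨by
    rintro u v (h | ⟨hne, hk, h1, h2, h3, h4⟩)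
    · exact Or.inl h.symm
    · exact Or.inr ⟨hne.symm, hk, h2, h1, h4, h3⟩⟩
  loopless := ⟨by
    rintro u (h | ⟨hne, _⟩)
    · exact H.loopless.irrefl u h
    · exact hne rfl⟩

/-- The sequence of graphs `E_0, E_1, …` in the triangulation process. -/
def triSeq {n : ℕ} (σ : V ≃ Fin n) (G : SimpleGraph V) : ℕ → SimpleGraph V
  | 0 => G
  | k + 1 => triStep σ (triSeq σ G k) k

/-- The triangulation `D^σ(G)` of `G` under the ordering `σ` (`p − 2` elimination steps). -/
def triangulation {n : ℕ} (σ : V ≃ Fin n) (G : SimpleGraph V) : SimpleGraph V :=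
  triSeq σ G (n - 2)

/-- `σ` is a perfect elimination ordering of `G`: for every `j`, the vertex `σ⁻¹(j)` together
with its higher-labelled neighbours forms a clique. -/
def IsPerfectElimOrdering {n : ℕ} (σ : V ≃ Fin n) (G : SimpleGraph V) : Prop :=
  ∀ j : Fin n,
    G.IsClique ({σ.symm j} ∪ {v : V | (j : ℕ) < (σ v : ℕ) ∧ G.Adj v (σ.symm j)})

/-- A graph is decomposable (chordal) if it has no induced cycle of length `≥ 4`. -/
def IsDecomposable (G : SimpleGraph V) : Prop :=
  ∀ n : ℕ, 4 ≤ n → IsEmpty (SimpleGraph.cycleGraph n ↪g G)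

/-- `σ` is a Generalized Bartlett ordering of `G`: no triangle of `D^σ(G)` consists of three
non-edges of `G`. -/
def IsGBOrdering {n : ℕ} (σ : V ≃ Fin n) (G : SimpleGraph V) : Prop :=
  ¬ ∃ u v w : V,
      ¬ G.Adj u v ∧ ¬ G.Adj v w ∧ ¬ G.Adj u w ∧
      (triangulation σ G).Adj u v ∧ (triangulation σ G).Adj v w ∧
      (triangulation σ G).Adj u w

/-- `G` is a Generalized Bartlett graph: it admits a Generalized Bartlett ordering. -/
def IsGB (G : SimpleGraph V) : Prop :=
  ∃ (n : ℕ) (σ : V ≃ Fin n), IsGBOrdering σ G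

open Matrix
open scoped Classical BigOperators

/-- Column `j` (as a natural number), row `i`, of the modified Cholesky factor `L(L_I, D)`. -/
noncomputable def cholCol (p : ℕ) (G : SimpleGraph (Fin p)) (ℓ : Fin p → Fin p → ℝ)
    (D : Fin p → ℝ) : ℕ → Fin p → ℝ
  | j => fun i =>
    if hj : j < p then
      if (i : ℕ) = j then 1
      else if (i : ℕ) < j then 0
      else if G.Adj i ⟨j, hj⟩ then ℓ i ⟨j, hj⟩
      else -(∑ k ∈ (Finset.range j).attach,
          cholCol p G ℓ D k.1 i * cholCol p G ℓ D k.1 ⟨j, hj⟩ *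
            D ⟨k.1, (Finset.mem_range.mp k.2).trans hj⟩) / D ⟨j, hj⟩
    else 0
termination_by j => j
decreasing_by all_goals exact Finset.mem_range.mp k.2

/-- The modified Cholesky factor `L(L_I, D)` as a matrix. -/
noncomputable def cholMat (p : ℕ) (G : SimpleGraph (Fin p)) (ℓ : Fin p → Fin p → ℝ)
    (D : Fin p → ℝ) : Matrix (Fin p) (Fin p) ℝ :=
  Matrix.of fun i j => cholCol p G ℓ D (j : ℕ) i

/-- `Ω(L_I, D) = L D Lᵀ`. -/
noncomputable def OmegaMat (p : ℕ) (G : SimpleGraph (Fin p)) (ℓ : Fin p → Fin p → ℝ)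
    (D : Fin p → ℝ) : Matrix (Fin p) (Fin p) ℝ :=
  cholMat p G ℓ D * Matrix.diagonal D * (cholMat p G ℓ D)ᵀ

/-- `ν_j = #{i : i > j, (i,j) ∈ E}`. -/
noncomputable def nuG (p : ℕ) (G : SimpleGraph (Fin p)) (j : Fin p) : ℕ :=
  (Finset.univ.filter fun i : Fin p => j < i ∧ G.Adj i j).card

/-- Recover `D` from `D̃`:  `D_k = ∏_{l ≤ k} D̃_l`. -/
noncomputable def Dof (p : ℕ) (Dt : Fin p → ℝ) (k : Fin p) : ℝ :=
  ∏ l ∈ Finset.Iic k, Dt l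

/-- Update the `(r,s)` entry of a function of two indices. -/
def updEntry (p : ℕ) (ℓ : Fin p → Fin p → ℝ) (r s : Fin p) (t : ℝ) :
    Fin p → Fin p → ℝ :=
  fun i j => if i = r ∧ j = s then t else ℓ i j

/-- The unnormalized generalized `G`-Wishart density `π*_{U,δ}`, as a function of the full
Cholesky data `(ℓ, D)`:  `(∏_j D_j^{(δ_j + 2ν_j)/2}) · exp(−tr(Ω U)/2)`. -/
noncomputable def gwDensFull (p : ℕ) (G : SimpleGraph (Fin p))
    (U : Matrix (Fin p) (Fin p) ℝ) (δ : Fin p → ℝ)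
    (ℓ : Fin p → Fin p → ℝ) (D : Fin p → ℝ) : ℝ :=
  (∏ j : Fin p, D j ^ ((δ j + 2 * (nuG p G j : ℝ)) / 2)) *
    Real.exp (-(OmegaMat p G ℓ D * U).trace / 2)

/-- The density `π̃` in `(L_I, D̃)` coordinates:
`π̃(L_I, D̃) = (∏_{k=1}^{p−1} D̃_k^{p−k}) · π*_{U,δ}(L_I, D(D̃))` (1-based indices;
0-based below: `k` with `(k : ℕ) < p − 1`, exponent `p − 1 − k`). -/
noncomputable def tildeDens (p : ℕ) (G : SimpleGraph (Fin p))
    (U : Matrix (Fin p) (Fin p) ℝ) (δ : Fin p → ℝ)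
    (ℓ : Fin p → Fin p → ℝ) (Dt : Fin p → ℝ) : ℝ :=
  (∏ k ∈ Finset.univ.filter fun k : Fin p => (k : ℕ) < p - 1,
      Dt k ^ (p - 1 - (k : ℕ))) *
    gwDensFull p G U δ ℓ (Dof p Dt)



section Helpers

lemma triSeq_mono {V : Type*} {n : ℕ} (σ : V ≃ Fin n) (G : SimpleGraph V) {m s : ℕ} (h : m ≤ s)
    {u v : V} (hadj : (triSeq σ G m).Adj u v) : (triSeq σ G s).Adj u v := by
  induction s with
  | zero => simpa [Nat.le_zero.mp h] using hadj
  | succ s ih =>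
    rcases Nat.lt_or_ge m (s+1) with h' | h'
    · exact Or.inl (ih (Nat.lt_succ_iff.mp h'))
    · have : m = s + 1 := le_antisymm h h'
      subst this; exact hadj

lemma triSeq_adj_down {p : ℕ} (G : SimpleGraph (Fin p)) {u v : Fin p} {s : ℕ}
    (h : (v : ℕ) ≤ s) (hadj : (triSeq (Equiv.refl (Fin p)) G s).Adj u v) :
    (triSeq (Equiv.refl (Fin p)) G (v : ℕ)).Adj u v := by
  induction s with
  | zero => simpa [Nat.le_zero.mp h] using hadj
  | succ s ih =>
    rcases Nat.lt_or_ge (v : ℕ) (s+1) with h' | h'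
    · apply ih (Nat.lt_succ_iff.mp h')
      rcases hadj with h'' | ⟨hne, hk, h1, h2, h3, h4⟩
      · exact h''
      · simp only [Equiv.refl_apply] at h2; omega
    · have : (v:ℕ) = s + 1 := le_antisymm h h'
      rw [this]; exact hadj

lemma edge_sub_triangulation {p : ℕ} (G : SimpleGraph (Fin p)) {u v : Fin p}
    (h : G.Adj u v) : (triangulation (Equiv.refl (Fin p)) G).Adj u v :=
  triSeq_mono _ G (Nat.zero_le _) h

lemma triangulation_fill {p : ℕ} (G : SimpleGraph (Fin p)) {i j r : Fin p}
    (hrj : (r : ℕ) < (j : ℕ)) (hji : (j : ℕ) < (i : ℕ))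
    (hir : (triangulation (Equiv.refl (Fin p)) G).Adj i r)
    (hjr : (triangulation (Equiv.refl (Fin p)) G).Adj j r) :
    (triangulation (Equiv.refl (Fin p)) G).Adj i j := by
  have hip : (i : ℕ) < p := i.isLt
  have hr2 : (r : ℕ) ≤ p - 2 := by omega
  have hir' := triSeq_adj_down G hr2 hir
  have hjr' := triSeq_adj_down G hr2 hjr
  have hstep : (triSeq (Equiv.refl (Fin p)) G ((r:ℕ)+1)).Adj i j := by
    refine Or.inr ⟨?_, ⟨r.isLt, ?_, ?_, ?_, ?_⟩⟩
    · intro h; exact absurd (congrArg Fin.val h) (by omega)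
    · simpa using by omega
    · simpa using by omega
    · simpa [Fin.eta] using hir'
    · simpa [Fin.eta] using hjr'
  exact triSeq_mono _ G (by omega) hstep

lemma cholCol_support (p : ℕ) (G : SimpleGraph (Fin p)) (ℓ : Fin p → Fin p → ℝ)
    (D : Fin p → ℝ) :
    ∀ j : ℕ, ∀ i : Fin p, ∀ hj : j < p, j < (i : ℕ) →
      ¬ (triangulation (Equiv.refl (Fin p)) G).Adj i ⟨j, hj⟩ →
      cholCol p G ℓ D j i = 0 := by
  intro j
  induction j using Nat.strong_induction_on with
  | _ j ih =>
    intro i hj hji hnadj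
    rw [cholCol]
    simp only [dif_pos hj, if_neg (show ¬(i:ℕ) = j by omega), if_neg (show ¬(i:ℕ) < j by omega),
      if_neg (fun h => hnadj (edge_sub_triangulation G h))]
    have hsum : ∀ m ∈ (Finset.range j).attach,
        cholCol p G ℓ D m.1 i * cholCol p G ℓ D m.1 ⟨j, hj⟩ *
          D ⟨m.1, (Finset.mem_range.mp m.2).trans hj⟩ = 0 := by
      rintro ⟨m, hm⟩ -
      have hmj : m < j := Finset.mem_range.mp hm
      have hmp : m < p := hmj.trans hj
      by_cases h1 : (triangulation (Equiv.refl (Fin p)) G).Adj i ⟨m, hmp⟩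
      · by_cases h2 : (triangulation (Equiv.refl (Fin p)) G).Adj ⟨j, hj⟩ ⟨m, hmp⟩
        · exact absurd (triangulation_fill G (by simp [hmj]) (by simpa using hji) h1 h2) hnadj
        · rw [ih m hmj ⟨j, hj⟩ hmp (by simpa using hmj) h2]; ring
      · rw [ih m hmj i hmp (by omega) h1]; ring
    rw [Finset.sum_congr rfl hsum]
    simp

lemma cholCol_diag (p : ℕ) (G : SimpleGraph (Fin p)) (ℓ : Fin p → Fin p → ℝ)
    (D : Fin p → ℝ) (j : ℕ) (hj : j < p) (i : Fin p) (h : (i : ℕ) = j) :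
    cholCol p G ℓ D j i = 1 := by
  rw [cholCol]; simp [hj, h]

lemma cholCol_of_adj (p : ℕ) (G : SimpleGraph (Fin p)) (ℓ : Fin p → Fin p → ℝ)
    (D : Fin p → ℝ) (j : ℕ) (hj : j < p) (i : Fin p) (h : j < (i : ℕ))
    (hadj : G.Adj i ⟨j, hj⟩) : cholCol p G ℓ D j i = ℓ i ⟨j, hj⟩ := by
  rw [cholCol]
  simp only [dif_pos hj, if_neg (show ¬(i:ℕ) = j by omega), if_neg (show ¬(i:ℕ) < j by omega),
    if_pos hadj]

lemma cholCol_fill (p : ℕ) (G : SimpleGraph (Fin p)) (ℓ : Fin p → Fin p → ℝ)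
    (D : Fin p → ℝ) (j : ℕ) (hj : j < p) (i : Fin p) (h : j < (i : ℕ))
    (hadj : ¬ G.Adj i ⟨j, hj⟩) :
    cholCol p G ℓ D j i = -(∑ m ∈ (Finset.range j).attach,
        cholCol p G ℓ D m.1 i * cholCol p G ℓ D m.1 ⟨j, hj⟩ *
          D ⟨m.1, (Finset.mem_range.mp m.2).trans hj⟩) / D ⟨j, hj⟩ := by
  rw [cholCol]
  simp only [dif_pos hj, if_neg (show ¬(i:ℕ) = j by omega), if_neg (show ¬(i:ℕ) < j by omega),
    if_neg hadj]

lemma Dof_update_of_lt {p : ℕ} (Dt : Fin p → ℝ) (k m : Fin p) (t : ℝ) (h : m < k) :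
    Dof p (Function.update Dt k t) m = Dof p Dt m :=
  Finset.prod_congr rfl fun l hl =>
    Function.update_of_ne (ne_of_lt (lt_of_le_of_lt (Finset.mem_Iic.mp hl) h)) _ _

lemma Dof_update_of_ge {p : ℕ} (Dt : Fin p → ℝ) (k m : Fin p) (t : ℝ) (h : k ≤ m) :
    Dof p (Function.update Dt k t) m = t * ∏ l ∈ (Finset.Iic m).erase k, Dt l := by
  rw [Dof, ← Finset.mul_prod_erase _ _ (Finset.mem_Iic.mpr h), Function.update_self]
  congr 1
  exact Finset.prod_congr rfl fun l hl =>
    Function.update_of_ne (Finset.mem_erase.mp hl).1 _ _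

lemma Dof_pos {p : ℕ} (Dt : Fin p → ℝ) (hDt : ∀ k', 0 < Dt k') (m : Fin p) :
    0 < Dof p Dt m := Finset.prod_pos fun l _ => hDt l

end Helpers

lemma chol_affine (p : ℕ) (G : SimpleGraph (Fin p))
    (hGB : IsGBOrdering (Equiv.refl (Fin p)) G)
    (ℓ : Fin p → Fin p → ℝ) (Dt : Fin p → ℝ) (hDt : ∀ k', 0 < Dt k') (k : Fin p) :
    ∀ j : ℕ, ∀ i : Fin p, ∃ A B : ℝ,
      (∀ t : ℝ, 0 < t →
        cholCol p G ℓ (Dof p (Function.update Dt k t)) j i = A + B / t) ∧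
      ((j < (k : ℕ) ∨ (k : ℕ) = 0) → B = 0) := by
  intro j
  induction j using Nat.strong_induction_on with
  | _ j ih =>
  intro i
  by_cases hj : j < p
  swap
  · exact ⟨0, 0, fun t ht => by rw [cholCol]; simp [hj], fun _ => rfl⟩
  by_cases hd : (i : ℕ) = j
  · exact ⟨1, 0, fun t ht => by rw [cholCol_diag p G ℓ _ j hj i hd]; simp, fun _ => rfl⟩
  by_cases hlt : (i : ℕ) < j
  · exact ⟨0, 0, fun t ht => by rw [cholCol]; simp [hj, hd, hlt], fun _ => rfl⟩
  have hji : j < (i : ℕ) := by omega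
  by_cases hadj : G.Adj i ⟨j, hj⟩
  · exact ⟨ℓ i ⟨j, hj⟩, 0, fun t ht => by
      rw [cholCol_of_adj p G ℓ _ j hj i hji hadj]; simp, fun _ => rfl⟩
  by_cases hDij : (triangulation (Equiv.refl (Fin p)) G).Adj i ⟨j, hj⟩
  swap
  · exact ⟨0, 0, fun t ht => by
      rw [cholCol_support p G ℓ _ j i hj hji hDij]; simp, fun _ => rfl⟩
  by_cases hkj : (k : ℕ) ≤ j
  · -- column j is affected by t : value is affine in 1/t
    have hterm : ∀ m : {x // x ∈ Finset.range j}, ∃ α β : ℝ,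
        (∀ t : ℝ, 0 < t →
          cholCol p G ℓ (Dof p (Function.update Dt k t)) m.1 i *
            cholCol p G ℓ (Dof p (Function.update Dt k t)) m.1 ⟨j, hj⟩ *
            Dof p (Function.update Dt k t) ⟨m.1, (Finset.mem_range.mp m.2).trans hj⟩
            = α + β * t) ∧ ((k : ℕ) = 0 → α = 0) := by
      rintro ⟨m, hm⟩
      have hmj : m < j := Finset.mem_range.mp hm
      have hmp : m < p := hmj.trans hj
      obtain ⟨A1, B1, h1, h1'⟩ := ih m hmj i
      obtain ⟨A2, B2, h2, h2'⟩ := ih m hmj ⟨j, hj⟩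
      by_cases hmk : m < (k : ℕ)
      · refine ⟨A1 * A2 * Dof p Dt ⟨m, hmp⟩, 0,
          fun t ht => ?_, fun h0 => absurd hmk (by omega)⟩
        rw [h1 t ht, h2 t ht, h1' (Or.inl hmk), h2' (Or.inl hmk),
          Dof_update_of_lt Dt k ⟨m, hmp⟩ t (by exact hmk)]
        ring
      · have hkm : k ≤ (⟨m, hmp⟩ : Fin p) := by
          simp only [Fin.le_def]; omega
        by_cases hD1 : (triangulation (Equiv.refl (Fin p)) G).Adj i ⟨m, hmp⟩
        swap
        · exact ⟨0, 0, fun t ht => by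
            rw [cholCol_support p G ℓ _ m i hmp (by omega) hD1]; ring_nf, fun _ => rfl⟩
        by_cases hD2 : (triangulation (Equiv.refl (Fin p)) G).Adj ⟨j, hj⟩ ⟨m, hmp⟩
        swap
        · exact ⟨0, 0, fun t ht => by
            rw [cholCol_support p G ℓ _ m ⟨j, hj⟩ hmp (by simpa using hmj) hD2]; ring_nf,
            fun _ => rfl⟩
        have hEdge : G.Adj i ⟨m, hmp⟩ ∨ G.Adj ⟨j, hj⟩ ⟨m, hmp⟩ := by
          by_contra hc
          push_neg at hc
          exact hGB ⟨i, ⟨m, hmp⟩, ⟨j, hj⟩, hc.1, fun h => hc.2 h.symm, hadj,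
            hD1, hD2.symm, hDij⟩
        rcases hEdge with hE | hE
        · refine ⟨ℓ i ⟨m, hmp⟩ * B2 * ∏ l ∈ (Finset.Iic (⟨m, hmp⟩ : Fin p)).erase k, Dt l,
            ℓ i ⟨m, hmp⟩ * A2 * ∏ l ∈ (Finset.Iic (⟨m, hmp⟩ : Fin p)).erase k, Dt l,
            fun t ht => ?_, fun h0 => by rw [h2' (Or.inr h0)]; ring⟩
          rw [cholCol_of_adj p G ℓ _ m hmp i (by omega) hE, h2 t ht,
            Dof_update_of_ge Dt k ⟨m, hmp⟩ t hkm]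
          field_simp
          ring
        · refine ⟨B1 * ℓ ⟨j, hj⟩ ⟨m, hmp⟩ * ∏ l ∈ (Finset.Iic (⟨m, hmp⟩ : Fin p)).erase k, Dt l,
            A1 * ℓ ⟨j, hj⟩ ⟨m, hmp⟩ * ∏ l ∈ (Finset.Iic (⟨m, hmp⟩ : Fin p)).erase k, Dt l,
            fun t ht => ?_, fun h0 => by rw [h1' (Or.inr h0)]; ring⟩
          rw [cholCol_of_adj p G ℓ _ m hmp ⟨j, hj⟩ (by simpa using hmj) hE, h1 t ht,
            Dof_update_of_ge Dt k ⟨m, hmp⟩ t hkm]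
          field_simp
          ring
    choose α β hαβ hα0 using hterm
    have hkj' : k ≤ (⟨j, hj⟩ : Fin p) := by simp only [Fin.le_def]; omega
    have hcpos : (0:ℝ) < ∏ l ∈ (Finset.Iic (⟨j, hj⟩ : Fin p)).erase k, Dt l :=
      Finset.prod_pos fun l _ => hDt l
    refine ⟨-(∑ m ∈ (Finset.range j).attach, β m) /
        ∏ l ∈ (Finset.Iic (⟨j, hj⟩ : Fin p)).erase k, Dt l,
      -(∑ m ∈ (Finset.range j).attach, α m) /
        ∏ l ∈ (Finset.Iic (⟨j, hj⟩ : Fin p)).erase k, Dt l,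
      fun t ht => ?_, fun h0 => by
        have hk0 : (k : ℕ) = 0 := h0.resolve_left (by omega)
        rw [Finset.sum_congr rfl fun m _ => hα0 m hk0]; simp⟩
    rw [cholCol_fill p G ℓ _ j hj i hji hadj,
      Dof_update_of_ge Dt k ⟨j, hj⟩ t hkj',
      Finset.sum_congr rfl fun m _ => hαβ m t ht,
      Finset.sum_add_distrib, ← Finset.sum_mul]
    field_simp
    ring
  · -- j < k : everything constant
    have hterm : ∀ m : {x // x ∈ Finset.range j}, ∃ α : ℝ,
        ∀ t : ℝ, 0 < t →
          cholCol p G ℓ (Dof p (Function.update Dt k t)) m.1 i *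
            cholCol p G ℓ (Dof p (Function.update Dt k t)) m.1 ⟨j, hj⟩ *
            Dof p (Function.update Dt k t) ⟨m.1, (Finset.mem_range.mp m.2).trans hj⟩
            = α := by
      rintro ⟨m, hm⟩
      have hmj : m < j := Finset.mem_range.mp hm
      have hmp : m < p := hmj.trans hj
      obtain ⟨A1, B1, h1, h1'⟩ := ih m hmj i
      obtain ⟨A2, B2, h2, h2'⟩ := ih m hmj ⟨j, hj⟩
      refine ⟨A1 * A2 * Dof p Dt ⟨m, hmp⟩, fun t ht => ?_⟩
      rw [h1 t ht, h2 t ht, h1' (Or.inl (by omega)), h2' (Or.inl (by omega)),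
        Dof_update_of_lt Dt k ⟨m, hmp⟩ t (by exact (by omega : m < (k:ℕ)))]
      ring
    choose α hα using hterm
    refine ⟨-(∑ m ∈ (Finset.range j).attach, α m) / Dof p Dt ⟨j, hj⟩, 0,
      fun t ht => ?_, fun _ => rfl⟩
    rw [cholCol_fill p G ℓ _ j hj i hji hadj,
      Dof_update_of_lt Dt k ⟨j, hj⟩ t (by exact (by omega : j < (k:ℕ))),
      Finset.sum_congr rfl fun m _ => hα m t ht, zero_div, add_zero]

lemma trace_eq (p : ℕ) (G : SimpleGraph (Fin p)) (ℓ : Fin p → Fin p → ℝ)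
    (D : Fin p → ℝ) (U : Matrix (Fin p) (Fin p) ℝ) :
    (OmegaMat p G ℓ D * U).trace =
      ∑ j : Fin p, D j * ∑ i : Fin p, ∑ r : Fin p,
        cholCol p G ℓ D (j : ℕ) i * cholCol p G ℓ D (j : ℕ) r * U r i := by
  have hM : ∀ a b : Fin p, OmegaMat p G ℓ D a b
      = ∑ x : Fin p, D x * (cholCol p G ℓ D (x : ℕ) a * cholCol p G ℓ D (x : ℕ) b) := by
    intro a b
    simp only [OmegaMat, Matrix.mul_apply, Matrix.mul_diagonal, Matrix.transpose_apply,
      cholMat, Matrix.of_apply, Matrix.diagonal_apply, mul_ite, mul_zero,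
      Finset.sum_ite_eq', Finset.mem_univ, if_true]
    exact Finset.sum_congr rfl fun x _ => by ring
  have h1 : (OmegaMat p G ℓ D * U).trace
      = ∑ a : Fin p, ∑ b : Fin p, ∑ x : Fin p,
          D x * (cholCol p G ℓ D (x : ℕ) a * cholCol p G ℓ D (x : ℕ) b) * U b a := by
    simp only [Matrix.trace, Matrix.diag_apply, Matrix.mul_apply, hM, Finset.sum_mul]
  rw [h1]
  have h2 : (∑ a : Fin p, ∑ b : Fin p, ∑ x : Fin p,
        D x * (cholCol p G ℓ D (x : ℕ) a * cholCol p G ℓ D (x : ℕ) b) * U b a)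
      = ∑ a : Fin p, ∑ x : Fin p, ∑ b : Fin p,
          D x * (cholCol p G ℓ D (x : ℕ) a * cholCol p G ℓ D (x : ℕ) b) * U b a :=
    Finset.sum_congr rfl fun a _ => Finset.sum_comm
  rw [h2, Finset.sum_comm]
  refine Finset.sum_congr rfl fun x _ => ?_
  rw [Finset.mul_sum]
  refine Finset.sum_congr rfl fun a _ => ?_
  rw [Finset.mul_sum]
  exact Finset.sum_congr rfl fun b _ => by ring

lemma quad_eq_dot (p : ℕ) (U : Matrix (Fin p) (Fin p) ℝ) (x : Fin p → ℝ) :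
    ∑ i : Fin p, ∑ r : Fin p, x i * x r * U r i = dotProduct x (U.mulVec x) := by
  rw [Finset.sum_comm]
  simp only [dotProduct, Matrix.mulVec, Finset.mul_sum]
  exact Finset.sum_congr rfl fun r _ => Finset.sum_congr rfl fun i _ => by ring

lemma quad_nonneg (p : ℕ) {U : Matrix (Fin p) (Fin p) ℝ} (hU : U.PosSemidef)
    (x : Fin p → ℝ) : 0 ≤ ∑ i : Fin p, ∑ r : Fin p, x i * x r * U r i := by
  rw [quad_eq_dot]
  simpa using hU.re_dotProduct_nonneg x

lemma quad_pos (p : ℕ) {U : Matrix (Fin p) (Fin p) ℝ} (hU : U.PosDef)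
    {x : Fin p → ℝ} (hx : x ≠ 0) : 0 < ∑ i : Fin p, ∑ r : Fin p, x i * x r * U r i := by
  rw [quad_eq_dot]
  simpa using hU.re_dotProduct_pos hx

/-- Theorem 5, part 2: under a Generalized Bartlett identity ordering, the full
conditional of each `D̃_k` is a Generalized Inverse Gaussian kernel
`C · t^{α_k} · exp(−(a t + b/t))` with `C > 0`, `a > 0`, `b ≥ 0`, where
`α_k = (p−k) + ∑_{l=k}^p (δ_l + 2ν_l)/2` (1-based; 0-based as displayed); for `k = 1`
(0-based `k = 0`) one may take `b = 0`, i.e. a Gamma kernel. -/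
theorem gig_full_conditional (p : ℕ) (G : SimpleGraph (Fin p))
    (hGB : IsGBOrdering (Equiv.refl (Fin p)) G)
    (U : Matrix (Fin p) (Fin p) ℝ) (hU : U.PosDef)
    (δ : Fin p → ℝ) (hδ : ∀ i, 0 < δ i)
    (k : Fin p) (ℓ : Fin p → Fin p → ℝ) (Dt : Fin p → ℝ) (hDt : ∀ k', 0 < Dt k') :
    ∃ C a b : ℝ, 0 < C ∧ 0 < a ∧ 0 ≤ b ∧ ((k : ℕ) = 0 → b = 0) ∧
      ∀ t : ℝ, 0 < t →
        tildeDens p G U δ ℓ (Function.update Dt k t) =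
          C * t ^ (((p : ℝ) - 1 - (k : ℕ)) +
              ∑ l ∈ Finset.Ici k, (δ l + 2 * (nuG p G l : ℝ)) / 2) *
            Real.exp (-(a * t + b / t)) := by
  choose Af Bf hAB hB0 using chol_affine p G hGB ℓ Dt hDt k
  -- per-column decomposition of the trace
  have hcol : ∀ j : Fin p, ∃ P Q R : ℝ, 0 ≤ P ∧ 0 ≤ R ∧ ((k : ℕ) = 0 → R = 0) ∧
      (j = k → 0 < P) ∧
      ∀ t : ℝ, 0 < t →
        Dof p (Function.update Dt k t) j *
          ∑ i : Fin p, ∑ r : Fin p,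
            cholCol p G ℓ (Dof p (Function.update Dt k t)) (j : ℕ) i *
              cholCol p G ℓ (Dof p (Function.update Dt k t)) (j : ℕ) r * U r i
          = P * t + Q + R / t := by
    intro j
    by_cases hjk : k ≤ j
    · have hcpos : (0:ℝ) < ∏ l ∈ (Finset.Iic j).erase k, Dt l :=
        Finset.prod_pos fun l _ => hDt l
      refine ⟨(∏ l ∈ (Finset.Iic j).erase k, Dt l) *
          ∑ i : Fin p, ∑ r : Fin p, Af (j : ℕ) i * Af (j : ℕ) r * U r i,
        (∏ l ∈ (Finset.Iic j).erase k, Dt l) *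
          ∑ i : Fin p, ∑ r : Fin p,
            (Af (j : ℕ) i * Bf (j : ℕ) r + Bf (j : ℕ) i * Af (j : ℕ) r) * U r i,
        (∏ l ∈ (Finset.Iic j).erase k, Dt l) *
          ∑ i : Fin p, ∑ r : Fin p, Bf (j : ℕ) i * Bf (j : ℕ) r * U r i,
        mul_nonneg hcpos.le (quad_nonneg p hU.posSemidef _),
        mul_nonneg hcpos.le (quad_nonneg p hU.posSemidef _),
        fun hk0 => ?_, fun hjk' => ?_, fun t ht => ?_⟩
      · have hBz : ∀ i, Bf (j : ℕ) i = 0 := fun i => hB0 _ i (Or.inr hk0)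
        simp [hBz]
      · subst hjk'
        have hA1 : Af (j : ℕ) j = 1 := by
          have h1 : ∀ t : ℝ, 0 < t → (1:ℝ) = Af (j : ℕ) j + Bf (j : ℕ) j / t := by
            intro t ht
            rw [← cholCol_diag p G ℓ (Dof p (Function.update Dt j t)) (j : ℕ) j.isLt j rfl]
            exact hAB (j : ℕ) j t ht
          have h2 := h1 1 one_pos
          have h3 := h1 2 two_pos
          rw [div_one] at h2
          have : Bf (j : ℕ) j / 2 = Bf (j : ℕ) j - Bf (j : ℕ) j / 2 := by ring
          linarith
        have hx : Af (j : ℕ) ≠ 0 := by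
          intro h
          have := congrFun h j
          rw [hA1] at this
          norm_num at this
        exact mul_pos hcpos (quad_pos p hU hx)
      · have htne : t ≠ 0 := ne_of_gt ht
        have e1 : ∀ i r : Fin p,
            cholCol p G ℓ (Dof p (Function.update Dt k t)) (j : ℕ) i *
              cholCol p G ℓ (Dof p (Function.update Dt k t)) (j : ℕ) r * U r i
            = Af (j : ℕ) i * Af (j : ℕ) r * U r i +
              ((Af (j : ℕ) i * Bf (j : ℕ) r + Bf (j : ℕ) i * Af (j : ℕ) r) * U r i) * (1/t) +
              (Bf (j : ℕ) i * Bf (j : ℕ) r * U r i) * (1/t * (1/t)) := by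
          intro i r
          rw [hAB (j : ℕ) i t ht, hAB (j : ℕ) r t ht]
          field_simp
          ring
        rw [Finset.sum_congr rfl fun i _ => Finset.sum_congr rfl fun r _ => e1 i r]
        simp only [Finset.sum_add_distrib, ← Finset.sum_mul]
        rw [Dof_update_of_ge Dt k j t hjk]
        field_simp
    · have hjk' : (j : ℕ) < (k : ℕ) := not_le.mp hjk
      have hBz : ∀ i, Bf (j : ℕ) i = 0 := fun i => hB0 _ i (Or.inl hjk')
      refine ⟨0, Dof p Dt j * ∑ i : Fin p, ∑ r : Fin p,
          Af (j : ℕ) i * Af (j : ℕ) r * U r i, 0,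
        le_refl 0, le_refl 0, fun _ => rfl,
        fun hjk'' => absurd (le_of_eq hjk''.symm) hjk, fun t ht => ?_⟩
      have e1 : ∀ i r : Fin p,
          cholCol p G ℓ (Dof p (Function.update Dt k t)) (j : ℕ) i *
            cholCol p G ℓ (Dof p (Function.update Dt k t)) (j : ℕ) r * U r i
          = Af (j : ℕ) i * Af (j : ℕ) r * U r i := by
        intro i r
        rw [hAB (j : ℕ) i t ht, hAB (j : ℕ) r t ht, hBz i, hBz r]
        simp
      rw [Finset.sum_congr rfl fun i _ => Finset.sum_congr rfl fun r _ => e1 i r,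
        Dof_update_of_lt Dt k j t (not_le.mp hjk)]
      ring
  choose P Q R h1 h2 h3 h4 h5 using hcol
  have htrace : ∀ t : ℝ, 0 < t →
      (OmegaMat p G ℓ (Dof p (Function.update Dt k t)) * U).trace =
        (∑ j : Fin p, P j) * t + (∑ j : Fin p, Q j) + (∑ j : Fin p, R j) / t := by
    intro t ht
    rw [trace_eq, Finset.sum_congr rfl fun j _ => h5 j t ht, Finset.sum_add_distrib,
      Finset.sum_add_distrib, ← Finset.sum_mul, ← Finset.sum_div]
  -- prefactor 1
  have hC1pos : (0:ℝ) < ∏ k' ∈ (Finset.univ.filter fun k' : Fin p => (k' : ℕ) < p - 1).erase k,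
      Dt k' ^ (p - 1 - (k' : ℕ)) :=
    Finset.prod_pos fun l _ => pow_pos (hDt l) _
  have hP1 : ∀ t : ℝ,
      (∏ k' ∈ Finset.univ.filter fun k' : Fin p => (k' : ℕ) < p - 1,
        Function.update Dt k t k' ^ (p - 1 - (k' : ℕ)))
      = t ^ (p - 1 - (k : ℕ)) *
        ∏ k' ∈ (Finset.univ.filter fun k' : Fin p => (k' : ℕ) < p - 1).erase k,
          Dt k' ^ (p - 1 - (k' : ℕ)) := by
    intro t
    by_cases hks : k ∈ Finset.univ.filter fun k' : Fin p => (k' : ℕ) < p - 1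
    · rw [← Finset.mul_prod_erase _ _ hks, Function.update_self]
      congr 1
      exact Finset.prod_congr rfl fun l hl => by
        rw [Function.update_of_ne (Finset.mem_erase.mp hl).1]
    · have hk1 : ¬ ((k:ℕ) < p - 1) := by simpa using hks
      have : p - 1 - (k : ℕ) = 0 := by omega
      rw [this, pow_zero, one_mul, Finset.erase_eq_of_notMem hks]
      exact Finset.prod_congr rfl fun l hl => by
        rw [Function.update_of_ne (fun h : l = k => hks (by rw [← h]; exact hl))]
  -- prefactor 2
  have hC2pos : (0:ℝ) <
      (∏ j ∈ Finset.Ici k, (∏ l ∈ (Finset.Iic j).erase k, Dt l) ^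
          ((δ j + 2 * (nuG p G j : ℝ)) / 2)) *
        ∏ j ∈ Finset.univ.filter (fun j : Fin p => ¬ k ≤ j),
          Dof p Dt j ^ ((δ j + 2 * (nuG p G j : ℝ)) / 2) :=
    mul_pos
      (Finset.prod_pos fun j _ =>
        Real.rpow_pos_of_pos (Finset.prod_pos fun l _ => hDt l) _)
      (Finset.prod_pos fun j _ => Real.rpow_pos_of_pos (Dof_pos Dt hDt j) _)
  have hP2 : ∀ t : ℝ, 0 < t →
      (∏ j : Fin p, Dof p (Function.update Dt k t) j ^ ((δ j + 2 * (nuG p G j : ℝ)) / 2))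
      = t ^ (∑ l ∈ Finset.Ici k, (δ l + 2 * (nuG p G l : ℝ)) / 2) *
        ((∏ j ∈ Finset.Ici k, (∏ l ∈ (Finset.Iic j).erase k, Dt l) ^
            ((δ j + 2 * (nuG p G j : ℝ)) / 2)) *
          ∏ j ∈ Finset.univ.filter (fun j : Fin p => ¬ k ≤ j),
            Dof p Dt j ^ ((δ j + 2 * (nuG p G j : ℝ)) / 2)) := by
    intro t ht
    have hIci : Finset.univ.filter (fun j : Fin p => k ≤ j) = Finset.Ici k := by
      ext j; simp
    rw [← Finset.prod_filter_mul_prod_filter_not Finset.univ (fun j : Fin p => k ≤ j), hIci]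
    have hh1 : ∀ j ∈ Finset.Ici k,
        Dof p (Function.update Dt k t) j ^ ((δ j + 2 * (nuG p G j : ℝ)) / 2)
        = t ^ ((δ j + 2 * (nuG p G j : ℝ)) / 2) *
          (∏ l ∈ (Finset.Iic j).erase k, Dt l) ^ ((δ j + 2 * (nuG p G j : ℝ)) / 2) := by
      intro j hj
      rw [Dof_update_of_ge Dt k j t (Finset.mem_Ici.mp hj),
        Real.mul_rpow ht.le (Finset.prod_pos fun l _ => hDt l).le]
    have hh2 : ∀ j ∈ Finset.univ.filter (fun j : Fin p => ¬ k ≤ j),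
        Dof p (Function.update Dt k t) j ^ ((δ j + 2 * (nuG p G j : ℝ)) / 2)
        = Dof p Dt j ^ ((δ j + 2 * (nuG p G j : ℝ)) / 2) := by
      intro j hj
      rw [Dof_update_of_lt Dt k j t (not_le.mp (Finset.mem_filter.mp hj).2)]
    rw [Finset.prod_congr rfl hh1, Finset.prod_congr rfl hh2, Finset.prod_mul_distrib,
      ← Real.rpow_sum_of_pos ht]
    ring
  refine ⟨(∏ k' ∈ (Finset.univ.filter fun k' : Fin p => (k' : ℕ) < p - 1).erase k,
        Dt k' ^ (p - 1 - (k' : ℕ))) *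
      (((∏ j ∈ Finset.Ici k, (∏ l ∈ (Finset.Iic j).erase k, Dt l) ^
            ((δ j + 2 * (nuG p G j : ℝ)) / 2)) *
          ∏ j ∈ Finset.univ.filter (fun j : Fin p => ¬ k ≤ j),
            Dof p Dt j ^ ((δ j + 2 * (nuG p G j : ℝ)) / 2)) *
        Real.exp (-(∑ j : Fin p, Q j) / 2)),
    (∑ j : Fin p, P j) / 2, (∑ j : Fin p, R j) / 2,
    mul_pos hC1pos (mul_pos hC2pos (Real.exp_pos _)), ?_, ?_, ?_, ?_⟩
  · have : (0:ℝ) < ∑ j : Fin p, P j :=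
      Finset.sum_pos' (fun j _ => h1 j) ⟨k, Finset.mem_univ k, h4 k rfl⟩
    linarith
  · have : (0:ℝ) ≤ ∑ j : Fin p, R j := Finset.sum_nonneg fun j _ => h2 j
    linarith
  · intro hk0
    rw [Finset.sum_eq_zero fun j _ => h3 j hk0]
    norm_num
  · intro t ht
    simp only [tildeDens, gwDensFull]
    rw [htrace t ht, hP1 t, hP2 t ht]
    have hE : t ^ (p - 1 - (k : ℕ)) *
        t ^ (∑ l ∈ Finset.Ici k, (δ l + 2 * (nuG p G l : ℝ)) / 2)
        = t ^ (((p : ℝ) - 1 - (k : ℕ)) +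
            ∑ l ∈ Finset.Ici k, (δ l + 2 * (nuG p G l : ℝ)) / 2) := by
      have hkp : (k : ℕ) < p := k.isLt
      have hc : ((p : ℝ) - 1 - (k : ℕ)) = ((p - 1 - (k : ℕ) : ℕ) : ℝ) := by
        have h1' : (k : ℕ) ≤ p - 1 := by omega
        have h2' : 1 ≤ p := by omega
        rw [Nat.cast_sub h1', Nat.cast_sub h2', Nat.cast_one]
      rw [hc, Real.rpow_add ht, Real.rpow_natCast]
    rw [← hE]
    have hexp : Real.exp (-((∑ j : Fin p, P j) * t + (∑ j : Fin p, Q j) +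
          (∑ j : Fin p, R j) / t) / 2)
        = Real.exp (-(∑ j : Fin p, Q j) / 2) *
          Real.exp (-((∑ j : Fin p, P j) / 2 * t + (∑ j : Fin p, R j) / 2 / t)) := by
      rw [← Real.exp_add]
      congr 1
      ring
    rw [hexp]
    ring
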